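/- There is a function f : ℕ → ℕ such that the following holds: for every positive integer m, every prime q, every elementary abelian group A of order q² acting by automorphisms on a finite group G with gcd(|A|,|G|) = 1, if |C_G(a)| ≤ m for every nontrivial a ∈ A, then |G| ≤ f(m). In particular the bound is independent of q. -/

import Mathlib

/-- The subgroup of fixed points of a single automorphism `φ a`. -/
def fixedSub {A G : Type*} [Group A] [Group G] (φ : A →* MulAut G) (a : A) : Subgroup G where
  carrier := {g : G | φ a g = g}
  one_mem' := map_one _
  mul_mem' := by
    intro x y hx hy
    simp only [Set.mem_setOf_eq, map_mul] at *
    rw [hx, hy]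
  inv_mem' := by
    intro x hx
    simp only [Set.mem_setOf_eq, map_inv] at *
    rw [hx]

namespace CBIQ

variable {A H : Type*} [Group A] [Group H]

@[simp] lemma mem_fixedSub {φ : A →* MulAut H} {a : A} {g : H} :
    g ∈ fixedSub φ a ↔ φ a g = g := Iff.rfl

/-- The stabilizer in `A` of an element `g`. -/
def stab (φ : A →* MulAut H) (g : H) : Subgroup A where
  carrier := {x | φ x g = g}
  one_mem' := by simp
  mul_mem' := by
    intro x y hx hy
    simp only [Set.mem_setOf_eq, map_mul, MulAut.mul_apply] at *
    rw [hy, hx]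
  inv_mem' := by
    intro x hx
    simp only [Set.mem_setOf_eq] at *
    conv_lhs => rw [← hx]
    rw [← MulAut.mul_apply, ← map_mul, inv_mul_cancel, map_one, MulAut.one_apply]

@[simp] lemma mem_stab {φ : A →* MulAut H} {g : H} {x : A} :
    x ∈ stab φ g ↔ φ x g = g := Iff.rfl

/-- Fixed points of a subgroup `S` of `A`. -/
def fixedBy (φ : A →* MulAut H) (S : Subgroup A) : Subgroup H where
  carrier := {g | ∀ x ∈ S, φ x g = g}
  one_mem' := by simp
  mul_mem' := by
    intro g h hg hh x hx
    rw [map_mul, hg x hx, hh x hx]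
  inv_mem' := by
    intro g hg x hx
    rw [map_inv, hg x hx]

@[simp] lemma mem_fixedBy {φ : A →* MulAut H} {S : Subgroup A} {g : H} :
    g ∈ fixedBy φ S ↔ ∀ x ∈ S, φ x g = g := Iff.rfl

lemma fixedBy_zpowers (φ : A →* MulAut H) (a : A) :
    fixedBy φ (Subgroup.zpowers a) = fixedSub φ a := by
  ext g
  constructor
  · intro hg
    exact hg a (Subgroup.mem_zpowers a)
  · intro hg x hx
    have : Subgroup.zpowers a ≤ stab φ g := by
      rw [Subgroup.zpowers_le]
      exact hg
    exact this hx

lemma fixedBy_top_le (φ : A →* MulAut H) (S : Subgroup A) :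
    fixedBy φ ⊤ ≤ fixedBy φ S := fun g hg x hx => hg x trivial

lemma fixedBy_top_le_fixedSub (φ : A →* MulAut H) (a : A) :
    fixedBy φ ⊤ ≤ fixedSub φ a := by
  rw [← fixedBy_zpowers]; exact fixedBy_top_le φ _

/-- Restriction of an action by automorphisms to an invariant subgroup. -/
def restrictAut (φ : A →* MulAut H) (K : Subgroup H)
    (hK : ∀ x : A, ∀ k ∈ K, φ x k ∈ K) : A →* MulAut K where
  toFun x :=
    { toFun := fun k => ⟨φ x k, hK x k k.2⟩
      invFun := fun k => ⟨φ x⁻¹ k, hK x⁻¹ k k.2⟩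
      left_inv := fun k => Subtype.ext <| by
        simp only [← MulAut.mul_apply, ← map_mul, inv_mul_cancel, map_one, MulAut.one_apply]
      right_inv := fun k => Subtype.ext <| by
        simp only [← MulAut.mul_apply, ← map_mul, mul_inv_cancel, map_one, MulAut.one_apply]
      map_mul' := fun k l => Subtype.ext <| by simp }
  map_one' := by
    ext k
    simp
  map_mul' x y := by
    ext k
    simp [MulAut.mul_apply]

@[simp] lemma restrictAut_apply (φ : A →* MulAut H) (K : Subgroup H)
    (hK : ∀ x : A, ∀ k ∈ K, φ x k ∈ K) (x : A) (k : K) :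
    (restrictAut φ K hK x k : H) = φ x k := rfl


lemma map_eq_of_inv (φ : A →* MulAut H) (N : Subgroup H)
    (hN : ∀ x : A, ∀ n ∈ N, φ x n ∈ N) (x : A) :
    N.map (φ x : H ≃* H) = N := by
  apply le_antisymm
  · rintro _ ⟨n, hn, rfl⟩
    exact hN x n hn
  · intro n hn
    refine ⟨φ x⁻¹ n, hN x⁻¹ n hn, ?_⟩
    show (φ x) ((φ x⁻¹) n) = n
    rw [← MulAut.mul_apply, ← map_mul, mul_inv_cancel, map_one, MulAut.one_apply]

/-- Induced action on the quotient by an invariant normal subgroup. -/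
def quotAut (φ : A →* MulAut H) (N : Subgroup H) [N.Normal]
    (hN : ∀ x : A, ∀ n ∈ N, φ x n ∈ N) : A →* MulAut (H ⧸ N) where
  toFun x := QuotientGroup.congr N N (φ x) (map_eq_of_inv φ N hN x)
  map_one' := by
    ext g
    induction g using QuotientGroup.induction_on with
    | H g => simp [QuotientGroup.congr]
  map_mul' x y := by
    ext g
    induction g using QuotientGroup.induction_on with
    | H g => simp [QuotientGroup.congr, MulAut.mul_apply]

@[simp] lemma quotAut_apply_mk (φ : A →* MulAut H) (N : Subgroup H) [N.Normal]
    (hN : ∀ x : A, ∀ n ∈ N, φ x n ∈ N) (x : A) (g : H) :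
    quotAut φ N hN x (g : H ⧸ N) = ((φ x g : H) : H ⧸ N) := rfl


lemma card_modEq_fixedBy {q : ℕ} [Fact q.Prime] [Finite H] (φ : A →* MulAut H)
    (S : Subgroup A) (hS : IsPGroup q S) :
    Nat.card H ≡ Nat.card (fixedBy φ S) [MOD q] := by
  letI : MulAction S H := MulAction.compHom H (φ.comp S.subtype)
  have he : MulAction.fixedPoints S H ≃ fixedBy φ S := by
    apply Equiv.subtypeEquiv (Equiv.refl H)
    intro h
    simp only [MulAction.mem_fixedPoints, Equiv.refl_apply, SetLike.mem_coe, mem_fixedBy]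
    constructor
    · intro hfix x hx; exact hfix ⟨x, hx⟩
    · intro hfix s; exact hfix s s.2
  calc Nat.card H ≡ Nat.card (MulAction.fixedPoints S H) [MOD q] :=
        hS.card_modEq_card_fixedPoints H
  _ = _ := Nat.card_congr he

lemma fixedBy_map_quot {q : ℕ} [Fact q.Prime] [Finite H] (φ : A →* MulAut H)
    (N : Subgroup H) [N.Normal] (hN : ∀ x : A, ∀ n ∈ N, φ x n ∈ N)
    (S : Subgroup A) (hS : IsPGroup q S) (hqN : ¬ q ∣ Nat.card N) :
    fixedBy (quotAut φ N hN) S = (fixedBy φ S).map (QuotientGroup.mk' N) := by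
  apply le_antisymm
  · intro xb hxb
    obtain ⟨g, rfl⟩ := QuotientGroup.mk'_surjective N xb
    letI : MulAction S {h : H // (QuotientGroup.mk' N) h = (QuotientGroup.mk' N) g} :=
      { smul := fun s t => ⟨φ (s : A) t.1, by
          show ((φ (s:A) t.1 : H) : H ⧸ N) = (g : H ⧸ N)
          have h1 : ((φ (s:A) t.1 : H) : H ⧸ N) = quotAut φ N hN (s : A) (t.1 : H ⧸ N) := rfl
          have ht : (t.1 : H ⧸ N) = (g : H ⧸ N) := t.2
          rw [h1, ht]
          exact hxb (s : A) s.2⟩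
        one_smul := fun t => Subtype.ext (by show φ 1 t.1 = t.1; simp)
        mul_smul := fun s s' t => Subtype.ext (by
          show φ ((s : A) * (s' : A)) t.1 = φ (s:A) (φ (s':A) t.1)
          rw [map_mul, MulAut.mul_apply]) }
    have hcard : Nat.card {h : H // (QuotientGroup.mk' N) h = (QuotientGroup.mk' N) g}
        = Nat.card N := by
      apply Nat.card_congr
      refine ⟨fun t => ⟨g⁻¹ * t.1, ?_⟩, fun n => ⟨g * n.1, ?_⟩, ?_, ?_⟩
      · have h2 : t.1⁻¹ * g ∈ N := QuotientGroup.eq.mp t.2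
        have h3 := N.inv_mem h2
        rwa [mul_inv_rev, inv_inv] at h3
      · show ((g * (n : H) : H) : H ⧸ N) = (g : H ⧸ N)
        apply QuotientGroup.eq.mpr
        simp [mul_assoc]
      · intro t; apply Subtype.ext; simp
      · intro n; apply Subtype.ext; simp
    have hnd : ¬ q ∣ Nat.card {h : H // (QuotientGroup.mk' N) h = (QuotientGroup.mk' N) g} := by
      rwa [hcard]
    obtain ⟨t, ht⟩ := hS.nonempty_fixed_point_of_prime_not_dvd_card _ hnd
    refine ⟨t.1, ?_, t.2⟩
    intro x hx
    have := ht ⟨x, hx⟩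
    exact congrArg Subtype.val this
  · rintro _ ⟨g, hg, rfl⟩
    intro x hx
    show quotAut φ N hN x ((g : H) : H ⧸ N) = _
    rw [quotAut_apply_mk, hg x hx]
    rfl


lemma center_inv (φ : A →* MulAut H) :
    ∀ x : A, ∀ h ∈ Subgroup.center H, φ x h ∈ Subgroup.center H := by
  intro x h hh
  rw [Subgroup.mem_center_iff] at hh ⊢
  intro g
  have hg : g = φ x (φ x⁻¹ g) := by
    rw [← MulAut.mul_apply, ← map_mul, mul_inv_cancel, map_one, MulAut.one_apply]
  conv_lhs => rw [hg]
  conv_rhs => rw [hg]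
  rw [← map_mul, ← map_mul, hh (φ x⁻¹ g)]

lemma card_fixed_factor {q : ℕ} [Fact q.Prime] [Finite H] (φ : A →* MulAut H)
    (N : Subgroup H) [N.Normal] (hN : ∀ x : A, ∀ n ∈ N, φ x n ∈ N)
    {a : A} (hz : IsPGroup q (Subgroup.zpowers a)) (hcopN : ¬ q ∣ Nat.card N) :
    Nat.card (fixedSub φ a) =
      Nat.card (fixedSub (quotAut φ N hN) a) * Nat.card (fixedSub (restrictAut φ N hN) a) := by
  classical
  set C := fixedSub φ a with hC
  set f : C →* H ⧸ N := (QuotientGroup.mk' N).comp C.subtype with hf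
  have hrange : f.range = C.map (QuotientGroup.mk' N) := by
    ext x
    constructor
    · rintro ⟨c, rfl⟩; exact ⟨c.1, c.2, rfl⟩
    · rintro ⟨c, hc, rfl⟩; exact ⟨⟨c, hc⟩, rfl⟩
  have hker : ∀ c : C, c ∈ f.ker ↔ (c : H) ∈ N := by
    intro c
    rw [MonoidHom.mem_ker]
    exact QuotientGroup.eq_one_iff _
  have h1 : Nat.card C = Nat.card (C ⧸ f.ker) * Nat.card f.ker :=
    Subgroup.card_eq_card_quotient_mul_card_subgroup f.ker
  have h2 : Nat.card (C ⧸ f.ker) = Nat.card f.range :=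
    Nat.card_congr (QuotientGroup.quotientKerEquivRange f).toEquiv
  have h3 : C.map (QuotientGroup.mk' N) = fixedSub (quotAut φ N hN) a := by
    have h := fixedBy_map_quot φ N hN (Subgroup.zpowers a) hz hcopN
    rw [fixedBy_zpowers, fixedBy_zpowers] at h
    exact h.symm
  have h4 : Nat.card f.ker = Nat.card (fixedSub (restrictAut φ N hN) a) := by
    apply Nat.card_congr
    refine ⟨fun c => ⟨⟨c.1.1, (hker c.1).mp c.2⟩, Subtype.ext c.1.2⟩,
      fun k => ⟨⟨k.1.1, congrArg Subtype.val k.2⟩, (hker _).mpr k.1.2⟩, ?_, ?_⟩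
    · intro c; apply Subtype.ext; apply Subtype.ext; rfl
    · intro k; apply Subtype.ext; apply Subtype.ext; rfl
  rw [h1, h2, hrange, h3, h4]

section Asec

variable {q : ℕ} {A : Type*} [CommGroup A] [Fintype A] [DecidableEq A]
variable {W : Type*} [CommGroup W] [Finite W]


lemma subgroup_eq_of_le_of_card_le' {G : Type*} [Group G] [Finite G] {H K : Subgroup G}
    (h : H ≤ K) (hc : Nat.card K ≤ Nat.card H) : H = K := by
  have hinj : Function.Injective (Subgroup.inclusion h) := Subgroup.inclusion_injective h
  have hcard : Nat.card H = Nat.card K := le_antisymm (Subgroup.card_le_of_le h) hc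
  have hbij : Function.Bijective (Subgroup.inclusion h) :=
    (Nat.bijective_iff_injective_and_card _).mpr ⟨hinj, hcard⟩
  apply le_antisymm h
  intro k hk
  obtain ⟨⟨x, hx⟩, hx2⟩ := hbij.2 ⟨k, hk⟩
  have : x = k := congrArg Subtype.val hx2
  exact this ▸ hx

lemma orderOf_of_ne_one [Fact q.Prime] (hexp : ∀ a : A, a ^ q = 1) {a : A} (ha : a ≠ 1) :
    orderOf a = q := orderOf_eq_prime (hexp a) ha

/-- q+1 = number of subgroups of order q; key fixed-point-free lemma. -/
lemma fpf_abelian [Fact q.Prime] (hA : Nat.card A = q ^ 2) (hexp : ∀ a : A, a ^ q = 1)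
    (φ : A →* MulAut W) (hcop : ¬ q ∣ Nat.card W)
    (hfix : ∀ a : A, a ≠ 1 → fixedSub φ a = ⊥) (w : W) : w = 1 := by
  classical
  have hq : q.Prime := Fact.out
  -- some element ≠ 1
  have hnt : Nontrivial A := by
    rw [← Finite.one_lt_card_iff_nontrivial, hA]
    exact one_lt_pow₀ hq.one_lt (by norm_num)
  obtain ⟨a₀, ha₀⟩ := exists_ne (1 : A)
  -- products over subsets closed under left multiplication are fixed
  have prod_fixed : ∀ (c : A) (T : Finset A), (∀ a ∈ T, c * a ∈ T) →
      φ c (∏ a ∈ T, φ a w) = ∏ a ∈ T, φ a w := by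
    intro c T hT
    have himg : T.image (fun a => c * a) = T := by
      apply Finset.eq_of_subset_of_card_le
      · intro x hx
        obtain ⟨a, ha, rfl⟩ := Finset.mem_image.mp hx
        exact hT a ha
      · rw [Finset.card_image_of_injective _ (mul_right_injective c)]
    calc φ c (∏ a ∈ T, φ a w) = ∏ a ∈ T, φ c (φ a w) := map_prod (φ c) _ _
    _ = ∏ a ∈ T, φ (c * a) w := by
        apply Finset.prod_congr rfl
        intro a _
        rw [map_mul, MulAut.mul_apply]
    _ = ∏ b ∈ T.image (fun a => c * a), φ b w := by
        rw [Finset.prod_image (fun x _ y _ h => mul_right_injective c h)]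
    _ = ∏ a ∈ T, φ a w := by rw [himg]
  -- the finset of a subgroup
  have subprod_one : ∀ c : A, c ≠ 1 →
      ∏ a ∈ ((Subgroup.zpowers c : Subgroup A) : Set A).toFinset, φ a w = 1 := by
    intro c hc
    have hmem : ∏ a ∈ ((Subgroup.zpowers c : Subgroup A) : Set A).toFinset, φ a w
        ∈ fixedSub φ c := by
      show φ c _ = _
      apply prod_fixed
      intro a ha
      rw [Set.mem_toFinset] at ha ⊢
      exact mul_mem (Subgroup.mem_zpowers c) ha
    rw [hfix c hc] at hmem
    exact hmem
  have univprod_one : ∏ a : A, φ a w = 1 := by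
    have hmem : (∏ a : A, φ a w) ∈ fixedSub φ a₀ := by
      show φ a₀ _ = _
      exact prod_fixed a₀ Finset.univ (fun a _ => Finset.mem_univ _)
    rw [hfix a₀ ha₀] at hmem
    exact hmem
  -- fibers of a ↦ zpowers-a-finset on univ.erase 1
  set U : Finset A := Finset.univ.erase 1 with hU
  set ψ : A → Finset A := fun a => ((Subgroup.zpowers a : Subgroup A) : Set A).toFinset with hψ
  have hmaps : ∀ a ∈ U, ψ a ∈ U.image ψ := fun a ha => Finset.mem_image_of_mem ψ ha
  have hcardz : ∀ a : A, a ≠ 1 → (ψ a).card = q := by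
    intro a ha
    calc (ψ a).card = Fintype.card (↑(Subgroup.zpowers a) : Set A) := by
          rw [hψ]; exact Set.toFinset_card _
    _ = Nat.card (↑(Subgroup.zpowers a) : Set A) := (Nat.card_eq_fintype_card).symm
    _ = Nat.card ↥(Subgroup.zpowers a) :=
          Nat.card_congr (Equiv.subtypeEquivRight (fun x => Iff.rfl))
    _ = q := by rw [Nat.card_zpowers, orderOf_of_ne_one hexp ha]
  have hfiber : ∀ b ∈ U, U.filter (fun a => ψ a = ψ b) = (ψ b).erase 1 := by
    intro b hb
    have hbne : b ≠ 1 := (Finset.mem_erase.mp hb).1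
    ext a
    simp only [Finset.mem_filter, Finset.mem_erase, hU, Finset.mem_univ, and_true, true_and]
    constructor
    · rintro ⟨ha1, hab⟩
      refine ⟨ha1, ?_⟩
      rw [← hab, hψ, Set.mem_toFinset]
      exact Subgroup.mem_zpowers a
    · rintro ⟨ha1, hab⟩
      refine ⟨ha1, ?_⟩
      rw [hψ, Set.mem_toFinset] at hab
      have hle : Subgroup.zpowers a ≤ Subgroup.zpowers b := Subgroup.zpowers_le.mpr hab
      have : Subgroup.zpowers a = Subgroup.zpowers b := by
        apply subgroup_eq_of_le_of_card_le' hle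
        rw [Nat.card_zpowers, Nat.card_zpowers, orderOf_of_ne_one hexp ha1,
          orderOf_of_ne_one hexp hbne]
      simp only [hψ]
      exact Set.toFinset_congr (by rw [this])
  have hfibprod : ∀ B ∈ U.image ψ, ∏ a ∈ U.filter (fun a => ψ a = B), φ a w = w⁻¹ := by
    intro B hB
    obtain ⟨b, hb, rfl⟩ := Finset.mem_image.mp hB
    have hbne : b ≠ 1 := (Finset.mem_erase.mp hb).1
    rw [hfiber b hb]
    have h1mem : (1 : A) ∈ ψ b := by
      rw [hψ, Set.mem_toFinset]
      exact Subgroup.one_mem _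
    have hsplit : φ (1 : A) w * ∏ x ∈ (ψ b).erase 1, φ x w = ∏ x ∈ ψ b, φ x w :=
      Finset.mul_prod_erase (ψ b) (fun a => φ a w) h1mem
    have hfull : ∏ a ∈ ψ b, φ a w = 1 := subprod_one b hbne
    have hφ1 : φ (1 : A) w = w := by simp
    rw [hfull, hφ1] at hsplit
    exact (inv_eq_of_mul_eq_one_right hsplit).symm
  have htotU : ∏ a ∈ U, φ a w = w⁻¹ := by
    have hsplit : φ (1 : A) w * ∏ x ∈ Finset.univ.erase 1, φ x w = ∏ x : A, φ x w :=
      Finset.mul_prod_erase Finset.univ (fun a => φ a w) (Finset.mem_univ (1 : A))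
    have hφ1 : φ (1 : A) w = w := by simp
    rw [univprod_one, hφ1] at hsplit
    exact (inv_eq_of_mul_eq_one_right hsplit).symm
  set k := (U.image ψ).card with hk
  have hfib := Finset.prod_fiberwise_of_maps_to hmaps (fun a => φ a w)
  have hpow : (w⁻¹) ^ k = w⁻¹ := by
    have h1 : ∏ j ∈ Finset.image ψ U, ∏ i ∈ Finset.filter (fun i => ψ i = j) U, φ i w
        = (w⁻¹) ^ k := by
      rw [Finset.prod_congr rfl hfibprod, Finset.prod_const, hk]
    rw [← h1, hfib]
    exact htotU
  -- count k = q + 1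
  have hq2 : 2 ≤ q := hq.two_le
  have hcount := Finset.card_eq_sum_card_fiberwise hmaps
  have hUcard : U.card = q ^ 2 - 1 := by
    rw [hU, Finset.card_erase_of_mem (Finset.mem_univ _), Finset.card_univ,
      ← Nat.card_eq_fintype_card, hA]
  have hsum : U.card = k * (q - 1) := by
    rw [hcount]
    rw [Finset.sum_congr rfl (fun B hB => ?_), Finset.sum_const, smul_eq_mul]
    obtain ⟨b, hb, rfl⟩ := Finset.mem_image.mp hB
    rw [hfiber b hb, Finset.card_erase_of_mem, hcardz b (Finset.mem_erase.mp hb).1]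
    rw [hψ, Set.mem_toFinset]
    exact Subgroup.one_mem _
  have hkval : k = q + 1 := by
    have hfact : (q + 1) * (q - 1) = q ^ 2 - 1 := by
      obtain ⟨r, rfl⟩ : ∃ r, q = r + 2 := ⟨q - 2, by omega⟩
      have h1 : (r + 2 + 1) * (r + 2 - 1) = r * r + 4 * r + 3 := by
        have : r + 2 - 1 = r + 1 := by omega
        rw [this]; ring
      have h2 : (r + 2) ^ 2 = r * r + 4 * r + 4 := by ring
      omega
    have : k * (q - 1) = (q + 1) * (q - 1) := by
      rw [← hsum, hUcard, hfact]
    exact Nat.eq_of_mul_eq_mul_right (by omega) this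
  rw [hkval, pow_succ] at hpow
  have hq0 : (w⁻¹) ^ q = 1 := mul_right_cancel (hpow.trans (one_mul w⁻¹).symm)
  have hwq : w ^ q = 1 := by
    rw [inv_pow] at hq0
    rwa [inv_eq_one] at hq0
  have hdvd : orderOf w ∣ q := orderOf_dvd_of_pow_eq_one hwq
  rcases (Nat.Prime.eq_one_or_self_of_dvd hq _ hdvd) with h1 | h1
  · exact orderOf_eq_one_iff.mp h1
  · exfalso
    apply hcop
    rw [← h1]
    exact orderOf_dvd_natCard w

lemma card_sup_le {V : Type*} [CommGroup V] [Finite V] (H K : Subgroup V) :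
    Nat.card (H ⊔ K : Subgroup V) ≤ Nat.card H * Nat.card K := by
  have hsurj : Function.Surjective (fun p : H × K => (⟨p.1.1 * p.2.1,
      Subgroup.mul_mem _ (Subgroup.mem_sup_left p.1.2) (Subgroup.mem_sup_right p.2.2)⟩ :
      (H ⊔ K : Subgroup V))) := by
    rintro ⟨x, hx⟩
    obtain ⟨y, hy, z, hz, rfl⟩ := Subgroup.mem_sup.mp hx
    exact ⟨(⟨y, hy⟩, ⟨z, hz⟩), rfl⟩
  calc Nat.card (H ⊔ K : Subgroup V) ≤ Nat.card (H × K) :=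
        Nat.card_le_card_of_surjective _ hsurj
  _ = Nat.card H * Nat.card K := Nat.card_prod _ _

lemma card_finsetSup_le {V : Type*} [CommGroup V] [Finite V] {ι : Type*} [DecidableEq ι]
    (f : ι → Subgroup V) (T : Finset ι) :
    Nat.card ↥(T.sup f) ≤ ∏ i ∈ T, Nat.card ↥(f i) := by
  induction T using Finset.induction_on with
  | empty => simp [Subgroup.card_bot]
  | @insert a s ha ih =>
      rw [Finset.sup_insert, Finset.prod_insert ha]
      exact le_trans (card_sup_le _ _) (Nat.mul_le_mul_left _ ih)

lemma quot_card_dvd {V : Type*} [Group V] [Finite V] (S : Subgroup V) [S.Normal] :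
    Nat.card (V ⧸ S) ∣ Nat.card V :=
  ⟨Nat.card S, Subgroup.card_eq_card_quotient_mul_card_subgroup S⟩

lemma isPGroup_zpowers [Fact q.Prime] (hexp : ∀ a : A, a ^ q = 1) {a : A} (ha : a ≠ 1) :
    IsPGroup q (Subgroup.zpowers a) :=
  IsPGroup.of_card (n := 1) (by rw [Nat.card_zpowers, orderOf_of_ne_one hexp ha, pow_one])

lemma abelian_card_le_prod [Fact q.Prime] (hA : Nat.card A = q ^ 2) (hexp : ∀ a : A, a ^ q = 1)
    (φ : A →* MulAut W) (hcop : ¬ q ∣ Nat.card W) :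
    Nat.card W ≤ ∏ a ∈ Finset.univ.erase (1 : A), Nat.card (fixedSub φ a) := by
  classical
  set U : Finset A := Finset.univ.erase 1 with hU
  set S : Subgroup W := U.sup (fun a => fixedSub φ a) with hS
  have hSle : ∀ a ∈ U, fixedSub φ a ≤ S := fun a ha => Finset.le_sup ha
  have hSinv : ∀ x : A, ∀ s ∈ S, φ x s ∈ S := by
    intro x s hs
    have hle : S ≤ Subgroup.comap (MulEquiv.toMonoidHom (φ x)) S := by
      apply Finset.sup_le
      intro a ha g hg
      have hmem : φ x g ∈ fixedSub φ a := by
        show φ a (φ x g) = φ x g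
        rw [← MulAut.mul_apply, ← map_mul, mul_comm a x, map_mul, MulAut.mul_apply,
          mem_fixedSub.mp hg]
      exact hSle a ha hmem
    exact hle hs
  set φq := quotAut φ S hSinv with hφq
  have hcopS : ¬ q ∣ Nat.card S :=
    fun hd => hcop (hd.trans (Subgroup.card_subgroup_dvd_card S))
  have hcopQ : ¬ q ∣ Nat.card (W ⧸ S) := fun h => hcop (h.trans (quot_card_dvd S))
  have hfixq : ∀ a : A, a ≠ 1 → fixedSub φq a = ⊥ := by
    intro a ha
    have h1 := fixedBy_map_quot φ S hSinv (Subgroup.zpowers a) (isPGroup_zpowers hexp ha) hcopS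
    rw [fixedBy_zpowers, fixedBy_zpowers] at h1
    rw [h1, Subgroup.map_eq_bot_iff, QuotientGroup.ker_mk']
    exact hSle a (Finset.mem_erase.mpr ⟨ha, Finset.mem_univ a⟩)
  have htriv := fpf_abelian hA hexp φq hcopQ hfixq
  have hStop : S = ⊤ := by
    rw [eq_top_iff]
    intro g _
    exact (QuotientGroup.eq_one_iff g).mp (htriv (g : W ⧸ S))
  calc Nat.card W = Nat.card S := by rw [hStop, Subgroup.card_top]
  _ ≤ ∏ a ∈ U, Nat.card (fixedSub φ a) := card_finsetSup_le _ U

lemma abelian_fixed_eq_top [Fact q.Prime] (hA : Nat.card A = q ^ 2) (hexp : ∀ a : A, a ^ q = 1)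
    (φ : A →* MulAut W) (hcop : ¬ q ∣ Nat.card W)
    (hyp : ∀ a : A, a ≠ 1 → fixedSub φ a ≤ fixedBy φ ⊤) : fixedBy φ ⊤ = ⊤ := by
  classical
  set D := fixedBy φ (⊤ : Subgroup A) with hD
  have hDinv : ∀ x : A, ∀ d ∈ D, φ x d ∈ D := by
    intro x d hd y _
    rw [← MulAut.mul_apply, ← map_mul, mul_comm y x, map_mul, MulAut.mul_apply, hd y trivial]
  set φq := quotAut φ D hDinv with hφq
  have hcopD : ¬ q ∣ Nat.card D :=
    fun hd => hcop (hd.trans (Subgroup.card_subgroup_dvd_card D))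
  have hcopQ : ¬ q ∣ Nat.card (W ⧸ D) := fun h => hcop (h.trans (quot_card_dvd D))
  have hfixq : ∀ a : A, a ≠ 1 → fixedSub φq a = ⊥ := by
    intro a ha
    have h1 := fixedBy_map_quot φ D hDinv (Subgroup.zpowers a) (isPGroup_zpowers hexp ha) hcopD
    rw [fixedBy_zpowers, fixedBy_zpowers] at h1
    rw [h1, Subgroup.map_eq_bot_iff, QuotientGroup.ker_mk']
    exact hyp a ha
  have htriv := fpf_abelian hA hexp φq hcopQ hfixq
  rw [eq_top_iff]
  intro g _
  exact (QuotientGroup.eq_one_iff g).mp (htriv (g : W ⧸ D))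

open scoped IsMulCommutative in
lemma pgroup_card_le_prod [Fact q.Prime] (hA : Nat.card A = q ^ 2) (hexp : ∀ a : A, a ^ q = 1)
    {p : ℕ} (hp : p.Prime) :
    ∀ (n : ℕ) (P : Type) [Group P] [Finite P], Nat.card P = n → IsPGroup p P →
      ∀ (φ : A →* MulAut P), ¬ q ∣ Nat.card P →
      Nat.card P ≤ ∏ a ∈ Finset.univ.erase (1 : A), Nat.card (fixedSub φ a) := by
  intro n
  induction n using Nat.strong_induction_on with
  | _ n ih =>
    intro P _ _ hn hP φ hcop
    by_cases hsing : Subsingleton P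
    · have h1 : Nat.card P ≤ 1 := Finite.card_le_one_iff_subsingleton.mpr hsing
      exact le_trans h1 (Finset.one_le_prod' (fun i _ => Nat.card_pos))
    · haveI : Nontrivial P := not_subsingleton_iff_nontrivial.mp hsing
      haveI := Fact.mk hp
      haveI : Nontrivial (Subgroup.center P) := hP.center_nontrivial
      set Z := Subgroup.center P with hZdef
      have hZinv : ∀ x : A, ∀ h ∈ Z, φ x h ∈ Z := center_inv φ
      set φZ := restrictAut φ Z hZinv with hφZ
      set φq := quotAut φ Z hZinv with hφq
      have hcopZ : ¬ q ∣ Nat.card Z :=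
        fun h => hcop (h.trans (Subgroup.card_subgroup_dvd_card Z))
      have hcopQ : ¬ q ∣ Nat.card (P ⧸ Z) := fun h => hcop (h.trans (quot_card_dvd Z))
      have hZ1 : 1 < Nat.card Z := Finite.one_lt_card
      have hsplit : Nat.card P = Nat.card (P ⧸ Z) * Nat.card Z :=
        Subgroup.card_eq_card_quotient_mul_card_subgroup Z
      have hlt : Nat.card (P ⧸ Z) < n := by
        rw [← hn, hsplit]
        exact (Nat.lt_mul_iff_one_lt_right Nat.card_pos).mpr hZ1
      have hQle := ih _ hlt (P ⧸ Z) rfl (hP.to_quotient Z) φq hcopQ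
      have hZle := abelian_card_le_prod hA hexp φZ hcopZ
      calc Nat.card P = Nat.card (P ⧸ Z) * Nat.card Z := hsplit
      _ ≤ (∏ a ∈ Finset.univ.erase (1 : A), Nat.card (fixedSub φq a)) *
            ∏ a ∈ Finset.univ.erase (1 : A), Nat.card (fixedSub φZ a) :=
          Nat.mul_le_mul hQle hZle
      _ = ∏ a ∈ Finset.univ.erase (1 : A),
            (Nat.card (fixedSub φq a) * Nat.card (fixedSub φZ a)) :=
          (Finset.prod_mul_distrib).symm
      _ = ∏ a ∈ Finset.univ.erase (1 : A), Nat.card (fixedSub φ a) := by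
          apply Finset.prod_congr rfl
          intro a ha
          exact (card_fixed_factor φ Z hZinv
            (isPGroup_zpowers hexp (Finset.mem_erase.mp ha).1) hcopZ).symm

open scoped IsMulCommutative in
lemma pgroup_fixed_eq_top [Fact q.Prime] (hA : Nat.card A = q ^ 2) (hexp : ∀ a : A, a ^ q = 1)
    {p : ℕ} (hp : p.Prime) :
    ∀ (n : ℕ) (P : Type) [Group P] [Finite P], Nat.card P = n → IsPGroup p P →
      ∀ (φ : A →* MulAut P), ¬ q ∣ Nat.card P →
      (∀ a : A, a ≠ 1 → fixedSub φ a ≤ fixedBy φ ⊤) → fixedBy φ ⊤ = ⊤ := by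
  intro n
  induction n using Nat.strong_induction_on with
  | _ n ih =>
    intro P _ _ hn hP φ hcop hyp
    by_cases hsing : Subsingleton P
    · exact Subsingleton.elim _ _
    · haveI : Nontrivial P := not_subsingleton_iff_nontrivial.mp hsing
      haveI := Fact.mk hp
      haveI : Nontrivial (Subgroup.center P) := hP.center_nontrivial
      set Z := Subgroup.center P with hZdef
      have hZinv : ∀ x : A, ∀ h ∈ Z, φ x h ∈ Z := center_inv φ
      set φZ := restrictAut φ Z hZinv with hφZ
      set φq := quotAut φ Z hZinv with hφq
      have hcopZ : ¬ q ∣ Nat.card Z :=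
        fun h => hcop (h.trans (Subgroup.card_subgroup_dvd_card Z))
      have hcopQ : ¬ q ∣ Nat.card (P ⧸ Z) := fun h => hcop (h.trans (quot_card_dvd Z))
      have hZ1 : 1 < Nat.card Z := Finite.one_lt_card
      have hlt : Nat.card (P ⧸ Z) < n := by
        rw [← hn, Subgroup.card_eq_card_quotient_mul_card_subgroup Z]
        exact (Nat.lt_mul_iff_one_lt_right Nat.card_pos).mpr hZ1
      have hypq : ∀ a : A, a ≠ 1 → fixedSub φq a ≤ fixedBy φq ⊤ := by
        intro a ha
        have h1 := fixedBy_map_quot φ Z hZinv (Subgroup.zpowers a)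
          (isPGroup_zpowers hexp ha) hcopZ
        rw [fixedBy_zpowers, fixedBy_zpowers] at h1
        rw [h1]
        rintro _ ⟨g, hg, rfl⟩ x _
        have hgD : g ∈ fixedBy φ ⊤ := hyp a ha hg
        show φq x ((g : P) : P ⧸ Z) = _
        rw [hφq, quotAut_apply_mk, hgD x trivial]
        rfl
      have htopq : fixedBy φq ⊤ = ⊤ :=
        ih _ hlt (P ⧸ Z) rfl (hP.to_quotient Z) φq hcopQ hypq
      have hztop : IsPGroup q (⊤ : Subgroup A) := by
        apply IsPGroup.of_card (n := 2)
        rw [Subgroup.card_top, hA]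
      have h2 := fixedBy_map_quot φ Z hZinv ⊤ hztop hcopZ
      rw [htopq] at h2
      have hypZ : ∀ a : A, a ≠ 1 → fixedSub φZ a ≤ fixedBy φZ ⊤ := by
        intro a ha k hk x _
        apply Subtype.ext
        show φ x k.1 = k.1
        have hkfix : (k : P) ∈ fixedSub φ a := congrArg Subtype.val hk
        exact hyp a ha hkfix x trivial
      have hZD : Z ≤ fixedBy φ ⊤ := by
        have habel := abelian_fixed_eq_top hA hexp φZ hcopZ hypZ
        intro z hz x _
        have hmem : (⟨z, hz⟩ : Z) ∈ fixedBy φZ ⊤ := by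
          rw [habel]; trivial
        exact congrArg Subtype.val (hmem x trivial)
      rw [eq_top_iff]
      intro g _
      have hmapmem : (g : P ⧸ Z) ∈ (fixedBy φ ⊤).map (QuotientGroup.mk' Z) := by
        rw [← h2]; trivial
      obtain ⟨d, hd, hdg⟩ := hmapmem
      have hz : d⁻¹ * g ∈ Z := by
        apply QuotientGroup.eq.mp
        exact hdg
      have hgd : g = d * (d⁻¹ * g) := by group
      rw [hgd]
      exact Subgroup.mul_mem _ hd (hZD hz)

end Asec
end CBIQ

open CBIQ Pointwise in
theorem card_bounded_independent_of_q :
    ∃ f : ℕ → ℕ, ∀ (m q : ℕ), 0 < m → q.Prime →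
      ∀ (A G : Type) [CommGroup A] [Finite A] [Group G] [Finite G],
        Nat.card A = q ^ 2 → (∀ a : A, a ^ q = 1) →
        ∀ φ : A →* MulAut G, Nat.Coprime (Nat.card A) (Nat.card G) →
          (∀ a : A, a ≠ 1 → Nat.card (fixedSub φ a) ≤ m) → Nat.card G ≤ f m := by
  classical
  refine ⟨fun m => (m ^ m ^ 2) ^ (m ^ m ^ 2), ?_⟩
  intro m q hm hq A G _ _ _ _ hA hexp φ hcop hbound
  haveI := Fintype.ofFinite A
  haveI := Fact.mk hq
  have hK1 : 1 ≤ m ^ m ^ 2 := Nat.one_le_iff_ne_zero.mpr (pow_ne_zero _ (by omega))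
  have hqG : ¬ q ∣ Nat.card G := by
    intro hdvd
    have h1 : q ∣ Nat.gcd (Nat.card A) (Nat.card G) :=
      Nat.dvd_gcd (hA ▸ dvd_pow_self q two_ne_zero) hdvd
    rw [Nat.Coprime] at hcop
    rw [hcop] at h1
    exact hq.one_lt.ne' (Nat.dvd_one.mp h1)
  have hnt : Nontrivial A := by
    rw [← Finite.one_lt_card_iff_nontrivial, hA]
    exact one_lt_pow₀ hq.one_lt (by norm_num)
  obtain ⟨a₀, ha₀⟩ := exists_ne (1 : A)
  have hztop : IsPGroup q (⊤ : Subgroup A) := by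
    apply IsPGroup.of_card (n := 2)
    rw [Subgroup.card_top, hA]
  -- the bound for each prime
  have key : ∀ p : ℕ, p.Prime → ∃ P : Sylow p G,
      Nat.card (P : Subgroup G) ≤ m ^ m ^ 2 := by
    intro p hp
    haveI := Fact.mk hp
    letI : MulDistribMulAction A G := MulDistribMulAction.compHom G φ
    have hAq : IsPGroup q A := IsPGroup.of_card hA
    have hnd : ¬ q ∣ Nat.card (Sylow p G) := by
      intro hdvd
      apply hqG
      obtain ⟨P0⟩ := (inferInstance : Nonempty (Sylow p G))
      exact hdvd.trans ((Sylow.card_dvd_index P0).trans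
        (Subgroup.index_dvd_card (P0 : Subgroup G)))
    obtain ⟨P, hPfix⟩ := hAq.nonempty_fixed_point_of_prime_not_dvd_card (Sylow p G) hnd
    have hinv : ∀ x : A, ∀ k ∈ (P : Subgroup G), φ x k ∈ (P : Subgroup G) := by
      intro x k hk
      have h1 : x • P = P := hPfix x
      have h2 : x • k ∈ x • (P : Subgroup G) := Subgroup.smul_mem_pointwise_smul k x _ hk
      have h4 : x • (P : Subgroup G) = (P : Subgroup G) := by
        rw [← Sylow.pointwise_smul_def, h1]
      rw [h4] at h2
      exact h2
    set ψ := restrictAut φ (P : Subgroup G) hinv with hψ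
    have hcopP : ¬ q ∣ Nat.card (P : Subgroup G) :=
      fun h => hqG (h.trans (Subgroup.card_subgroup_dvd_card _))
    have hbound' : ∀ a : A, a ≠ 1 → Nat.card (fixedSub ψ a) ≤ m := by
      intro a ha
      have hinj : Function.Injective
          (fun c : fixedSub ψ a => (⟨c.1.1, congrArg Subtype.val c.2⟩ : fixedSub φ a)) := by
        intro c d hcd
        have h5 := congrArg (fun x : fixedSub φ a => (x : G)) hcd
        simp only at h5
        apply Subtype.ext; apply Subtype.ext; exact h5
      exact le_trans (Nat.card_le_card_of_injective _ hinj) (hbound a ha)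
    by_cases hqm : q ≤ m
    · refine ⟨P, ?_⟩
      have h1 := pgroup_card_le_prod hA hexp hp (Nat.card (P : Subgroup G))
        (P : Subgroup G) rfl P.2 ψ hcopP
      have h2 : ∏ a ∈ Finset.univ.erase (1 : A), Nat.card (fixedSub ψ a)
          ≤ m ^ (Finset.univ.erase (1 : A)).card :=
        Finset.prod_le_pow_card _ _ _ (fun a ha => hbound' a (Finset.mem_erase.mp ha).1)
      have h3 : (Finset.univ.erase (1 : A)).card = q ^ 2 - 1 := by
        rw [Finset.card_erase_of_mem (Finset.mem_univ _), Finset.card_univ,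
          ← Nat.card_eq_fintype_card, hA]
      have h4 : m ^ (q ^ 2 - 1) ≤ m ^ m ^ 2 := by
        apply Nat.pow_le_pow_right (by omega)
        have := Nat.pow_le_pow_left hqm 2
        omega
      rw [h3] at h2
      exact le_trans h1 (le_trans h2 h4)
    · push_neg at hqm
      have hcards : ∀ a : A, a ≠ 1 →
          Nat.card (fixedSub ψ a) = Nat.card (fixedBy ψ (⊤ : Subgroup A)) := by
        intro a ha
        have m1 := card_modEq_fixedBy ψ (Subgroup.zpowers a) (isPGroup_zpowers hexp ha)
        rw [fixedBy_zpowers] at m1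
        have m2 := card_modEq_fixedBy ψ ⊤ hztop
        have m3 : Nat.card (fixedSub ψ a) ≡ Nat.card (fixedBy ψ (⊤ : Subgroup A)) [MOD q] :=
          m1.symm.trans m2
        have hle1 : Nat.card (fixedBy ψ (⊤ : Subgroup A)) ≤ Nat.card (fixedSub ψ a) :=
          Subgroup.card_le_of_le (fixedBy_top_le_fixedSub ψ a)
        have hlt1 : Nat.card (fixedSub ψ a) < q := lt_of_le_of_lt (hbound' a ha) hqm
        have hlt2 : Nat.card (fixedBy ψ (⊤ : Subgroup A)) < q := lt_of_le_of_lt hle1 hlt1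
        unfold Nat.ModEq at m3
        rwa [Nat.mod_eq_of_lt hlt1, Nat.mod_eq_of_lt hlt2] at m3
      have hfixEq : ∀ a : A, a ≠ 1 → fixedSub ψ a ≤ fixedBy ψ ⊤ := by
        intro a ha
        have heq := subgroup_eq_of_le_of_card_le' (fixedBy_top_le_fixedSub ψ a)
          (le_of_eq (hcards a ha))
        exact le_of_eq heq.symm
      have htop := pgroup_fixed_eq_top hA hexp hp (Nat.card (P : Subgroup G))
        (P : Subgroup G) rfl P.2 ψ hcopP hfixEq
      refine ⟨P, ?_⟩
      have hcardtop : Nat.card (P : Subgroup G) = Nat.card (fixedBy ψ (⊤ : Subgroup A)) := by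
        rw [htop, Subgroup.card_top]
      calc Nat.card (P : Subgroup G)
          = Nat.card (fixedBy ψ (⊤ : Subgroup A)) := hcardtop
      _ ≤ Nat.card (fixedSub ψ a₀) := Subgroup.card_le_of_le (fixedBy_top_le_fixedSub ψ a₀)
      _ ≤ m := hbound' a₀ ha₀
      _ ≤ m ^ m ^ 2 := Nat.le_self_pow (by positivity) m
  -- assemble over all primes
  have hn0 : Nat.card G ≠ 0 := Nat.card_pos.ne'
  have heach : ∀ p ∈ (Nat.card G).primeFactors,
      p ^ (Nat.card G).factorization p ≤ m ^ m ^ 2 := by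
    intro p hp
    have hpp := Nat.prime_of_mem_primeFactors hp
    haveI := Fact.mk hpp
    obtain ⟨P, hP⟩ := key p hpp
    rw [← Sylow.card_eq_multiplicity P]
    exact hP
  have hple : ∀ p ∈ (Nat.card G).primeFactors, p ≤ m ^ m ^ 2 := by
    intro p hp
    have hv : (Nat.card G).factorization p ≠ 0 := by
      have := Nat.Prime.factorization_pos_of_dvd (Nat.prime_of_mem_primeFactors hp) hn0
        (Nat.dvd_of_mem_primeFactors hp)
      omega
    exact le_trans (Nat.le_self_pow hv p) (heach p hp)
  have hsub : (Nat.card G).primeFactors ⊆ Finset.Ioc 1 (m ^ m ^ 2) := by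
    intro p hp
    rw [Finset.mem_Ioc]
    exact ⟨(Nat.prime_of_mem_primeFactors hp).one_lt, hple p hp⟩
  have hcardPF : (Nat.card G).primeFactors.card ≤ m ^ m ^ 2 := by
    refine le_trans (Finset.card_le_card hsub) ?_
    rw [Nat.card_Ioc]
    omega
  have hprod : ∏ p ∈ (Nat.card G).primeFactors, p ^ (Nat.card G).factorization p
      = Nat.card G := by
    have := Nat.factorization_prod_pow_eq_self hn0
    simp only [Finsupp.prod, Nat.support_factorization] at this
    exact this
  calc Nat.card G = ∏ p ∈ (Nat.card G).primeFactors, p ^ (Nat.card G).factorization p :=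
        hprod.symm
  _ ≤ (m ^ m ^ 2) ^ (Nat.card G).primeFactors.card :=
        Finset.prod_le_pow_card _ _ _ heach
  _ ≤ (m ^ m ^ 2) ^ (m ^ m ^ 2) := Nat.pow_le_pow_right (by omega) hcardPF
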